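/- arXiv:2209.12167 — 4 statements merged into one kernel-verified Lean document; each statement's English description precedes it below -/
import Mathlib

section
/- Let n be a positive integer and Δ a closed non-archimedean (equivalently totally disconnected) subgroup of 𝕋ⁿ such that the quotient 𝕋ⁿ/Δ is a compact connected locally connected abelian Polish group. Then 𝕋ⁿ/Δ is topologically isomorphic to 𝕋ⁿ. -/
open Real

noncomputable section

variable {n : ℕ}

lemma exp_zsmul' (k : ℤ) (t : ℝ) : Circle.exp (k * t) = Circle.exp t ^ k := by
  have := map_zsmul Circle.expHom k t
  simpa [zsmul_eq_mul] using congrArg Additive.toMul this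

lemma exp_sum' {ι : Type*} (s : Finset ι) (g : ι → ℝ) :
    Circle.exp (∑ j ∈ s, g j) = ∏ j ∈ s, Circle.exp (g j) := by
  classical
  induction s using Finset.cons_induction with
  | empty => simp
  | cons a s ha ih => rw [Finset.sum_cons, Finset.prod_cons, Circle.exp_add, ih]

lemma re_exp (t : ℝ) : ((Circle.exp t : ℂ)).re = Real.cos t := by
  simp [Circle.coe_exp, Complex.exp_mul_I, Complex.cos_ofReal_re]

lemma circle_eq_one (z : Circle) (h : ∀ k : ℕ, 0 < ((z ^ k : Circle) : ℂ).re) : z = 1 := by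
  by_contra hz
  set θ := Complex.arg (z : ℂ) with hθdef
  have hz0 : (z : ℂ) ≠ 0 := Circle.coe_ne_zero z
  have h1 : 0 < (z : ℂ).re := by simpa using h 1
  have habs : |θ| < π / 2 := Complex.abs_arg_lt_pi_div_two_iff.mpr (Or.inl h1)
  have hexp : Circle.exp θ = z := Circle.exp_arg z
  have hθne : θ ≠ 0 := by
    intro h0
    exact hz (by rw [← hexp, h0, Circle.exp_zero])
  have ha : 0 < |θ| := abs_pos.mpr hθne
  set k := ⌈(π / 2) / |θ|⌉₊ with hk
  have hka : π / 2 ≤ k * |θ| := by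
    rw [← div_le_iff₀ ha]
    exact Nat.le_ceil _
  have hka2 : k * |θ| < π := by
    have : (k : ℝ) < (π / 2) / |θ| + 1 := Nat.ceil_lt_add_one (by positivity)
    have h2 : (k : ℝ) * |θ| < ((π / 2) / |θ| + 1) * |θ| := by
      exact mul_lt_mul_of_pos_right this ha
    calc (k:ℝ) * |θ| < ((π / 2) / |θ| + 1) * |θ| := h2
      _ = π / 2 + |θ| := by rw [add_mul, div_mul_cancel₀ _ (ne_of_gt ha), one_mul]
      _ < π / 2 + π / 2 := by linarith
      _ = π := by ring
  have hzk : (z ^ k : Circle) = Circle.exp ((k : ℤ) * θ) := by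
    rw [exp_zsmul', hexp, zpow_natCast]
  have hre : ((z ^ k : Circle) : ℂ).re = Real.cos (k * θ) := by
    rw [hzk, re_exp]; norm_num
  have hcos : Real.cos ((k : ℝ) * θ) ≤ 0 := by
    have : Real.cos ((k : ℝ) * θ) = Real.cos (k * |θ|) := by
      rcases abs_cases θ with ⟨he, _⟩ | ⟨he, _⟩
      · rw [he]
      · rw [he, mul_neg, Real.cos_neg]
    rw [this]
    exact Real.cos_nonpos_of_pi_div_two_le_of_le hka (by linarith [pi_pos])
  have := h k
  rw [hre] at this
  linarith

lemma delta_finite {n : ℕ} (Δ : Subgroup (Fin n → Circle))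
    (hclosed : IsClosed (Δ : Set (Fin n → Circle)))
    (htd : IsTotallyDisconnected (Δ : Set (Fin n → Circle))) : Finite Δ := by
  haveI : CompactSpace Δ := isCompact_iff_compactSpace.mp (hclosed.isCompact)
  haveI : TotallyDisconnectedSpace Δ := totallyDisconnectedSpace_subtype_iff.mpr htd
  -- the open set W
  set W : Set (Fin n → Circle) := {x | ∀ i, 0 < ((x i : Circle) : ℂ).re} with hW
  have hWopen : IsOpen W := by
    have : W = ⋂ i, (fun x : Fin n → Circle => ((x i : Circle) : ℂ).re) ⁻¹' (Set.Ioi 0) := by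
      ext x; simp [hW]
    rw [this]
    exact isOpen_iInter_of_finite fun i =>
      (isOpen_Ioi.preimage (by continuity))
  have h1W : (1 : Fin n → Circle) ∈ W := by
    intro i; simp [Circle.coe_one]
  -- pull back to Δ
  set U : Set Δ := (Subtype.val) ⁻¹' W with hU
  have hUopen : IsOpen U := hWopen.preimage continuous_subtype_val
  have h1U : (1 : Δ) ∈ U := h1W
  obtain ⟨V, hVclopen, h1V, hVU⟩ := compact_exists_isClopen_in_isOpen hUopen h1U
  obtain ⟨H, hH⟩ := IsTopologicalGroup.exist_openSubgroup_sub_clopen_nhds_of_one hVclopen h1V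
  -- H is trivial
  have hHbot : ∀ x : Δ, x ∈ H.toSubgroup → x = 1 := by
    intro x hx
    have hk : ∀ k : ℕ, (x : Fin n → Circle) ^ k ∈ W := by
      intro k
      have : x ^ k ∈ H.toSubgroup := pow_mem hx k
      have := hVU (hH this)
      simpa [hU] using this
    have : ∀ i, (x : Fin n → Circle) i = 1 := by
      intro i
      apply circle_eq_one
      intro k
      have := hk k i
      simpa using this
    ext i
    simp [this i]
  have hopen : IsOpen ({1} : Set Δ) := by
    have : ({1} : Set Δ) = (H : Set Δ) := by
      ext x
      constructor
      · rintro rfl; exact one_mem _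
      · intro hx; exact hHbot x hx
    rw [this]; exact H.isOpen
  haveI : DiscreteTopology Δ := discreteTopology_of_isOpen_singleton_one hopen
  exact finite_of_compact_of_discrete

/-- The covering map `ℝⁿ → 𝕋ⁿ`. -/
def pmap (v : Fin n → ℝ) : Fin n → Circle := fun i => Circle.exp (2 * π * v i)


lemma pmap_add (v w : Fin n → ℝ) : pmap (v + w) = pmap v * pmap w := by
  funext i
  simp [pmap, mul_add, Circle.exp_add]

lemma pmap_zsmul (k : ℤ) (v : Fin n → ℝ) : pmap (k • v) = pmap v ^ k := by
  funext i
  have : 2 * π * (k • v) i = k * (2 * π * v i) := by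
    simp [Pi.smul_apply, zsmul_eq_mul]; ring
  simp only [pmap, this, exp_zsmul']
  rfl

lemma pmap_zero : pmap (0 : Fin n → ℝ) = 1 := by
  funext i; simp [pmap]

lemma pmap_eq_one_iff (v : Fin n → ℝ) : pmap v = 1 ↔ ∀ i, ∃ k : ℤ, v i = k := by
  constructor
  · intro h i
    have hi : Circle.exp (2 * π * v i) = 1 := congrFun h i
    obtain ⟨k, hk⟩ := Circle.exp_eq_one.mp hi
    refine ⟨k, ?_⟩
    have h2 : (2 * π) ≠ 0 := by positivity
    have : 2 * π * v i = 2 * π * k := by rw [hk]; ring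
    exact mul_left_cancel₀ h2 this
  · intro h
    funext i
    obtain ⟨k, hk⟩ := h i
    have : 2 * π * v i = k * (2 * π) := by rw [hk]; ring
    rw [pmap, this, Circle.exp_int_mul_two_pi]
    rfl

lemma pmap_surjective : Function.Surjective (pmap (n := n)) := by
  intro y
  refine ⟨fun i => Complex.arg (y i) / (2 * π), ?_⟩
  funext i
  have h2 : (2 * π) ≠ 0 := by positivity
  simp only [pmap, mul_div_cancel₀ _ h2]
  exact Circle.exp_arg (y i)


/-- The preimage lattice of `Δ`. -/
def lat (Δ : Subgroup (Fin n → Circle)) : Submodule ℤ (Fin n → ℝ) where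
  carrier := {v | pmap v ∈ Δ}
  add_mem' := by
    intro a b ha hb
    simp only [Set.mem_setOf_eq, pmap_add] at *
    exact mul_mem ha hb
  zero_mem' := by simp only [Set.mem_setOf_eq, pmap_zero]; exact one_mem Δ
  smul_mem' := by
    intro k v hv
    simp only [Set.mem_setOf_eq, pmap_zsmul] at *
    exact zpow_mem hv k

lemma mem_lat {Δ : Subgroup (Fin n → Circle)} {v : Fin n → ℝ} :
    v ∈ lat Δ ↔ pmap v ∈ Δ := Iff.rfl

lemma single_mem_lat (Δ : Subgroup (Fin n → Circle)) (j : Fin n) :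
    Pi.single j (1 : ℝ) ∈ lat Δ := by
  rw [mem_lat]
  have : pmap (Pi.single j (1:ℝ)) = 1 := by
    rw [pmap_eq_one_iff]
    intro i
    rcases eq_or_ne i j with h | h
    · exact ⟨1, by subst h; simp⟩
    · exact ⟨0, by simp [Pi.single_apply, Ne.symm h]⟩
  rw [this]; exact one_mem Δ

lemma lat_int_coord {Δ : Subgroup (Fin n → Circle)} [Finite Δ] {v : Fin n → ℝ}
    (hv : v ∈ lat Δ) (i : Fin n) : ∃ k : ℤ, (Nat.card Δ : ℝ) * v i = k := by
  have hm : pmap ((Nat.card Δ : ℤ) • v) = 1 := by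
    rw [pmap_zsmul]
    have h0 : (⟨pmap v, hv⟩ : Δ) ^ (Nat.card Δ) = 1 := pow_card_eq_one'
    have h2 : (pmap v) ^ (Nat.card Δ : ℕ) = 1 := by
      have h1 := Subtype.ext_iff.mp h0
      push_cast at h1
      exact h1
    rw [zpow_natCast, h2]
  have := (pmap_eq_one_iff _).mp hm i
  simpa using this

instance lat_discrete (Δ : Subgroup (Fin n → Circle)) [Finite Δ] :
    DiscreteTopology (lat Δ) := by
  have hm : 0 < (Nat.card Δ : ℝ) := by exact_mod_cast Nat.card_pos
  apply discreteTopology_of_isOpen_singleton_zero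
  have key : ({0} : Set (lat Δ)) = Subtype.val ⁻¹' (Metric.ball (0 : Fin n → ℝ) (1 / Nat.card Δ)) := by
    ext x
    obtain ⟨v, hv⟩ := x
    simp only [Set.mem_singleton_iff, Set.mem_preimage, Metric.mem_ball, dist_zero_right,
      Subtype.ext_iff, Submodule.coe_zero, ZeroMemClass.coe_zero]
    constructor
    · rintro rfl
      simpa using by positivity
    · intro hnorm
      funext i
      obtain ⟨k, hk⟩ := lat_int_coord hv i
      have h1 : |v i| ≤ ‖v‖ := by simpa using norm_le_pi_norm v i
      have h2 : |(k : ℝ)| < 1 := by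
        rw [← hk, abs_mul, abs_of_pos hm]
        calc (Nat.card Δ : ℝ) * |v i| ≤ (Nat.card Δ : ℝ) * ‖v‖ :=
              mul_le_mul_of_nonneg_left h1 (le_of_lt hm)
          _ < (Nat.card Δ : ℝ) * (1 / Nat.card Δ) := mul_lt_mul_of_pos_left hnorm hm
          _ = 1 := by field_simp
      have hk0 : k = 0 := by
        have h3 : |k| < 1 := by
          have h4 : ((|k| : ℤ) : ℝ) < 1 := by rw [Int.cast_abs]; exact h2
          exact_mod_cast h4
        have := abs_lt.mp h3
        omega
      rw [hk0] at hk
      simp only [Int.cast_zero] at hk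
      rcases mul_eq_zero.mp hk with h | h
      · exact absurd h (by positivity)
      · exact h
  rw [key]
  exact Metric.isOpen_ball.preimage continuous_subtype_val

instance lat_zlattice (Δ : Subgroup (Fin n → Circle)) [Finite Δ] : IsZLattice ℝ (lat Δ) := by
  constructor
  rw [eq_top_iff, ← (Pi.basisFun ℝ (Fin n)).span_eq]
  apply Submodule.span_le.mpr
  rintro x ⟨j, rfl⟩
  rw [Pi.basisFun_apply]
  exact Submodule.subset_span (single_mem_lat Δ j)

section basis
variable (Δ : Subgroup (Fin n → Circle)) [Finite Δ]

open Module

/-- a `ℤ`-basis of the lattice indexed by `Fin n` -/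
def latBasis : Basis (Fin n) ℤ (lat Δ) := by
  have hfree : Module.Free ℤ (lat Δ) := ZLattice.module_free ℝ (lat Δ)
  have hfin : Module.Finite ℤ (lat Δ) := ZLattice.module_finite ℝ (lat Δ)
  have hcard : Fintype.card (Free.ChooseBasisIndex ℤ (lat Δ)) = n := by
    rw [← finrank_eq_card_chooseBasisIndex, ZLattice.rank ℝ (lat Δ), finrank_fin_fun]
  exact (Free.chooseBasis ℤ (lat Δ)).reindex (Fintype.equivFinOfCardEq hcard)

/-- corresponding ℝ-basis of ℝⁿ -/
def latBasisR : Basis (Fin n) ℝ (Fin n → ℝ) := (latBasis Δ).ofZLatticeBasis ℝ (lat Δ)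

lemma mem_lat_iff_int_coords {v : Fin n → ℝ} :
    v ∈ lat Δ ↔ ∀ i, ∃ k : ℤ, (latBasisR Δ).repr v i = k := by
  constructor
  · intro hv i
    exact ⟨(latBasis Δ).repr ⟨v, hv⟩ i, (latBasis Δ).ofZLatticeBasis_repr_apply ℝ (lat Δ) ⟨v, hv⟩ i⟩
  · intro h
    choose k hk using h
    have : v = ∑ i, (k i : ℝ) • latBasisR Δ i := by
      conv_lhs => rw [← (latBasisR Δ).sum_repr v]
      congr 1
      funext i
      rw [hk i]
    rw [this]
    apply Submodule.sum_mem
    intro i _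
    rw [Int.cast_smul_eq_zsmul ℝ]
    apply Submodule.smul_mem
    show latBasisR Δ i ∈ lat Δ
    simp only [latBasisR]
    rw [(latBasis Δ).ofZLatticeBasis_apply ℝ (lat Δ) i]
    exact SetLike.coe_mem _

/-- the integer matrix -/
def latM : Fin n → Fin n → ℤ := fun i j => (latBasis Δ).repr ⟨Pi.single j 1, single_mem_lat Δ j⟩ i

lemma latM_spec (i j : Fin n) :
    ((latM Δ i j : ℝ)) = (latBasisR Δ).repr (Pi.single j 1) i :=
  ((latBasis Δ).ofZLatticeBasis_repr_apply ℝ (lat Δ) ⟨Pi.single j 1, single_mem_lat Δ j⟩ i).symm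

lemma repr_eq_sum (v : Fin n → ℝ) (i : Fin n) :
    (latBasisR Δ).repr v i = ∑ j, v j * latM Δ i j := by
  have hv : v = ∑ j, v j • (Pi.single j (1:ℝ) : Fin n → ℝ) := by
    funext i
    rw [Fintype.sum_apply]
    simp [Pi.single_apply]
  conv_lhs => rw [hv]
  rw [map_sum]
  rw [Finsupp.finset_sum_apply]
  congr 1
  funext j
  rw [map_smul, Finsupp.smul_apply, smul_eq_mul, latM_spec]

/-- the torus endomorphism given by the matrix `latM` -/
def torusHom : (Fin n → Circle) →* (Fin n → Circle) where
  toFun x := fun i => ∏ j, x j ^ (latM Δ i j)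
  map_one' := by funext i; simp
  map_mul' x y := by
    funext i
    simp only [Pi.mul_apply, mul_zpow, Finset.prod_mul_distrib]

variable {Δ}

lemma torusHom_pmap (v : Fin n → ℝ) :
    torusHom Δ (pmap v) = pmap (fun i => (latBasisR Δ).repr v i) := by
  funext i
  show ∏ j, (Circle.exp (2 * π * v j)) ^ (latM Δ i j) = Circle.exp (2 * π * (latBasisR Δ).repr v i)
  rw [repr_eq_sum, Finset.mul_sum, exp_sum']
  congr 1
  funext j
  rw [show 2 * π * (v j * (latM Δ i j)) = (latM Δ i j : ℝ) * (2 * π * v j) by ring, exp_zsmul']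

lemma torusHom_continuous : Continuous (torusHom Δ) := by
  apply continuous_pi
  intro i
  show Continuous fun x : Fin n → Circle => ∏ j, x j ^ (latM Δ i j)
  apply continuous_finset_prod
  intro j _
  exact (continuous_apply j).zpow _

lemma torusHom_surjective : Function.Surjective (torusHom Δ) := by
  intro y
  obtain ⟨w, hw⟩ := pmap_surjective y
  refine ⟨pmap ((latBasisR Δ).equivFun.symm w), ?_⟩
  rw [torusHom_pmap]
  have : (fun i => (latBasisR Δ).repr ((latBasisR Δ).equivFun.symm w) i) = w := by
    funext i
    rw [← Basis.equivFun_apply, LinearEquiv.apply_symm_apply]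
  rw [this, hw]

lemma torusHom_ker : (torusHom Δ).ker = Δ := by
  ext x
  obtain ⟨v, rfl⟩ := pmap_surjective x
  rw [MonoidHom.mem_ker, torusHom_pmap, pmap_eq_one_iff, ← mem_lat,
    mem_lat_iff_int_coords]

end basis
end

/-- Let `n` be a positive integer and `Δ` a closed totally disconnected (equivalently,
non-archimedean) subgroup of `𝕋ⁿ` such that the quotient `𝕋ⁿ/Δ` is locally connected
(it is automatically a compact connected abelian Polish group).  Then `𝕋ⁿ/Δ` is
topologically isomorphic to `𝕋ⁿ`. -/
theorem stmt_9 (n : ℕ) (hn : 0 < n) (Δ : Subgroup (Fin n → Circle))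
    (hclosed : IsClosed (Δ : Set (Fin n → Circle)))
    (htd : IsTotallyDisconnected (Δ : Set (Fin n → Circle)))
    (hlc : LocallyConnectedSpace ((Fin n → Circle) ⧸ Δ)) :
    ∃ e : ((Fin n → Circle) ⧸ Δ) ≃* (Fin n → Circle),
      Continuous e ∧ Continuous e.symm := by
  haveI : Finite Δ := delta_finite Δ hclosed htd
  set f := torusHom Δ with hf
  have hker : Δ = f.ker := (torusHom_ker).symm
  have hsurj : Function.Surjective f := torusHom_surjective
  set e := (QuotientGroup.quotientMulEquivOfEq hker).trans
    (QuotientGroup.quotientKerEquivOfSurjective f hsurj) with he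
  have hmk : ∀ x : Fin n → Circle, e (QuotientGroup.mk x) = f x := by
    intro x
    rfl
  have hcont : Continuous e := by
    have hq : Topology.IsQuotientMap (QuotientGroup.mk : (Fin n → Circle) → (Fin n → Circle) ⧸ Δ) :=
      isQuotientMap_quot_mk
    rw [hq.continuous_iff]
    have : (e ∘ (QuotientGroup.mk : (Fin n → Circle) → (Fin n → Circle) ⧸ Δ)) = f := by
      funext x; exact hmk x
    rw [this]
    exact torusHom_continuous
  refine ⟨e, hcont, ?_⟩
  have hT2 : T2Space (Fin n → Circle) := inferInstance
  have hcompact : CompactSpace ((Fin n → Circle) ⧸ Δ) := Quotient.compactSpace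
  exact (hcont.homeoOfEquivCompactToT2 (f := e.toEquiv)).symm.continuous
end

section
/- Every nontrivial proper closed subgroup of a P-adic solenoid Σ_P is totally disconnected. -/
open Set

lemma aux_finite_preconnected_subsingleton {α : Type*} [TopologicalSpace α] [T1Space α] {s : Set α}
    (hc : IsPreconnected s) (hf : s.Finite) : s.Subsingleton := by
  intro a ha b hb
  by_contra hab
  have h1 : IsClosed (s \ {a}) := (hf.subset diff_subset).isClosed
  rcases hc (s \ {a})ᶜ ({a}ᶜ) h1.isOpen_compl isClosed_singleton.isOpen_compl
      (fun x hx => by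
        by_cases hxa : x = a
        · exact Or.inl (by simp [hxa])
        · exact Or.inr (by simp [hxa]))
      ⟨a, ha, by simp⟩ ⟨b, hb, by simp [Ne.symm hab]⟩ with ⟨x, hxs, hxu, hxv⟩
  simp only [mem_compl_iff, mem_diff, mem_singleton_iff, not_and, not_not] at hxu hxv
  exact hxv (hxu hxs)

lemma aux_roots_finite (n : ℕ) (hn : n ≠ 0) : {z : Circle | z ^ n = 1}.Finite := by
  have hsub : {z : Circle | z ^ n = 1} ⊆ (fun z : Circle => (z : ℂ)) ⁻¹' ↑(Polynomial.nthRootsFinset n (1 : ℂ)) := by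
    intro z hz
    simp only [mem_preimage, Finset.mem_coe,
      Polynomial.mem_nthRootsFinset (Nat.pos_of_ne_zero hn) (1 : ℂ)]
    have : ((z ^ n : Circle) : ℂ) = ((1 : Circle) : ℂ) := by rw [hz]
    push_cast at this; exact this
  exact Set.Finite.subset
    (Set.Finite.preimage (Set.injOn_of_injective Circle.coe_injective)
      (Polynomial.nthRootsFinset n (1 : ℂ)).finite_toSet) hsub

lemma aux_exp_pow (r : ℝ) (m : ℕ) : (Circle.exp r) ^ m = Circle.exp (m * r) := by
  induction m with
  | zero => simp [Circle.exp_zero]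
  | succ k ih => rw [pow_succ, ih, ← Circle.exp_add]; congr 1; push_cast; ring

lemma aux_circle_dichotomy (S : Subgroup Circle) (hS : IsClosed (S : Set Circle)) :
    (S : Set Circle) = univ ∨ (S : Set Circle).Finite := by
  set T : AddSubgroup ℝ :=
    { carrier := Circle.exp ⁻¹' (S : Set Circle)
      zero_mem' := by simp only [mem_preimage, Circle.exp_zero]; exact S.one_mem
      add_mem' := by
        intro a b ha hb
        simp only [mem_preimage, Circle.exp_add] at *
        exact S.mul_mem ha hb
      neg_mem' := by
        intro a ha
        simp only [mem_preimage, Circle.exp_neg] at *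
        exact S.inv_mem ha } with hT
  have hTmem : ∀ r : ℝ, r ∈ T ↔ Circle.exp r ∈ S := fun r => Iff.rfl
  rcases T.dense_or_cyclic with hd | ⟨a, ha⟩
  · left
    apply eq_univ_of_forall
    intro z
    have hz : z = Circle.exp (Complex.arg (z : ℂ)) := (Circle.exp_arg z).symm
    have h1 : Complex.arg (z : ℂ) ∈ closure (T : Set ℝ) := by rw [hd.closure_eq]; trivial
    have h2 : Circle.exp (Complex.arg (z : ℂ)) ∈ closure (Circle.exp '' (T : Set ℝ)) :=
      (image_closure_subset_closure_image Circle.exp.continuous) ⟨_, h1, rfl⟩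
    have h3 : Circle.exp '' (T : Set ℝ) ⊆ (S : Set Circle) := by
      rintro _ ⟨r, hr, rfl⟩; exact hr
    rw [← hz] at h2
    exact hS.closure_subset (closure_mono h3 h2)
  · right
    have h2pi : (2 * Real.pi) ∈ T := by
      rw [hTmem]; rw [Circle.exp_two_pi]; exact S.one_mem
    rw [ha, AddSubgroup.mem_closure_singleton] at h2pi
    obtain ⟨n, hn⟩ := h2pi
    have hn0 : n ≠ 0 := by
      rintro rfl
      simp only [zero_smul] at hn
      have := Real.pi_pos
      linarith [hn]
    have hfin : (S : Set Circle) ⊆ {z : Circle | z ^ n.natAbs = 1} := by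
      intro z hz
      have hz' : z = Circle.exp (Complex.arg (z : ℂ)) := (Circle.exp_arg z).symm
      have hr : Complex.arg (z : ℂ) ∈ T := by rw [hTmem, ← hz']; exact hz
      rw [ha, AddSubgroup.mem_closure_singleton] at hr
      obtain ⟨k, hk⟩ := hr
      have : z ^ n.natAbs = Circle.exp ((n.natAbs : ℝ) * (k • a)) := by
        rw [hz', aux_exp_pow, hk]
      show z ^ n.natAbs = 1
      rw [this]
      have hn' : ((n : ℝ)) * a = 2 * Real.pi := by
        rw [zsmul_eq_mul] at hn; exact_mod_cast hn
      have hcases : ((n.natAbs : ℝ)) * a = 2 * Real.pi ∨ ((n.natAbs : ℝ)) * a = -(2 * Real.pi) := by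
        rw [Nat.cast_natAbs]
        rcases le_or_gt 0 n with h | h
        · left; rw [abs_of_nonneg h]; exact hn'
        · right; rw [abs_of_neg h]; push_cast; linarith
      have hexp : ((n.natAbs : ℝ)) * (k • a) = (k : ℝ) * ((n.natAbs : ℝ) * a) := by
        push_cast [zsmul_eq_mul]; ring
      rw [hexp]
      rcases hcases with h | h
      · rw [h]; exact Circle.exp_int_mul_two_pi k
      · rw [h]
        have : (k : ℝ) * -(2 * Real.pi) = ((-k : ℤ) : ℝ) * (2 * Real.pi) := by push_cast; ring
        rw [this]; exact Circle.exp_int_mul_two_pi (-k)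
    exact Set.Finite.subset (by
      have : n.natAbs ≠ 0 := Int.natAbs_ne_zero.mpr hn0
      exact aux_roots_finite n.natAbs this) hfin
/-- The `P`-adic solenoid, as a subgroup of `𝕋^ω`. -/
noncomputable def solenoid (P : ℕ → ℕ) : Subgroup (ℕ → Circle) where
  carrier := {g : ℕ → Circle | ∀ l, g l = g (l + 1) ^ P l}
  one_mem' := by intro l; simp
  mul_mem' := by
    intro a b ha hb l
    simp only [Pi.mul_apply, mul_pow, ← ha l, ← hb l]
  inv_mem' := by
    intro a ha l
    simp only [Pi.inv_apply, inv_pow, ← ha l]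

lemma solenoid_preconn_subgroup (P : ℕ → ℕ) (hP : ∀ i, (P i).Prime)
    (K : Subgroup (ℕ → Circle)) (hKsub : (K : Set (ℕ → Circle)) ⊆ (solenoid P : Set (ℕ → Circle)))
    (hKclosed : IsClosed (K : Set (ℕ → Circle)))
    (hKconn : IsPreconnected (K : Set (ℕ → Circle)))
    (hKne : (K : Set (ℕ → Circle)) ≠ (solenoid P : Set (ℕ → Circle))) : K = ⊥ := by
  have hKcompact : IsCompact (K : Set (ℕ → Circle)) := hKclosed.isCompact
  set S : ℕ → Set Circle := fun l => (fun g : ℕ → Circle => g l) '' (K : Set (ℕ → Circle)) with hSdef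
  have hS1 : ∀ l, (1 : Circle) ∈ S l := fun l => ⟨1, K.one_mem, rfl⟩
  have hSconn : ∀ l, IsPreconnected (S l) := fun l =>
    hKconn.image _ (continuous_apply l).continuousOn
  by_cases hall : ∀ l, S l = univ
  · exfalso
    apply hKne
    apply Set.Subset.antisymm hKsub
    intro g hg
    set A : ℕ → Set (ℕ → Circle) := fun l => (K : Set (ℕ → Circle)) ∩ {k | k l = g l} with hA
    have hAclosed : ∀ l, IsClosed (A l) :=
      fun l => hKclosed.inter (isClosed_singleton.preimage (continuous_apply l))
    have hAcs : IsCompact (A 0) := (hAclosed 0).isCompact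
    have hAne : ∀ l, (A l).Nonempty := by
      intro l
      have hgl : g l ∈ S l := by rw [hall l]; trivial
      obtain ⟨k, hk, hkl⟩ := hgl
      exact ⟨k, hk, hkl⟩
    have hAmono : ∀ l, A (l + 1) ⊆ A l := by
      rintro l k ⟨hk, hkl⟩
      refine ⟨hk, ?_⟩
      have h1 : k l = k (l + 1) ^ P l := hKsub hk l
      have h2 : g l = g (l + 1) ^ P l := hg l
      simp only [mem_setOf_eq] at hkl ⊢
      rw [h1, h2, hkl]
    obtain ⟨k, hk⟩ := IsCompact.nonempty_iInter_of_sequence_nonempty_isCompact_isClosed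
      A hAmono hAne hAcs hAclosed
    have hgk : g = k := by
      funext l
      exact ((mem_iInter.1 hk l).2).symm
    rw [hgk]
    exact (mem_iInter.1 hk 0).1
  · push_neg at hall
    obtain ⟨l0, hl0⟩ := hall
    have hl0triv : ∀ g ∈ K, g l0 = 1 := by
      set Sg : Subgroup Circle := K.map (Pi.evalMonoidHom (fun _ : ℕ => Circle) l0) with hSg
      have hSgcar : (Sg : Set Circle) = S l0 := rfl
      have hclosedS : IsClosed (Sg : Set Circle) := by
        rw [hSgcar]; exact (hKcompact.image (continuous_apply l0)).isClosed
      rcases aux_circle_dichotomy Sg hclosedS with h | h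
      · exact absurd (hSgcar ▸ h) hl0
      · have hsub : (S l0).Subsingleton :=
          aux_finite_preconnected_subsingleton (hSconn l0) (hSgcar ▸ h)
        intro g hg
        exact hsub ⟨g, hg, rfl⟩ (hS1 l0)
    have step_up : ∀ m, (∀ g ∈ K, g m = 1) → ∀ g ∈ K, g (m + 1) = 1 := by
      intro m hm
      have hsub : S (m + 1) ⊆ {z : Circle | z ^ P m = 1} := by
        rintro _ ⟨g, hg, rfl⟩
        show g (m + 1) ^ P m = 1
        rw [← hKsub hg m]
        exact hm g hg
      have hfin : (S (m + 1)).Finite :=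
        (aux_roots_finite (P m) (hP m).ne_zero).subset hsub
      have hss := aux_finite_preconnected_subsingleton (hSconn (m + 1)) hfin
      intro g hg
      exact hss ⟨g, hg, rfl⟩ (hS1 (m + 1))
    have step_down : ∀ m, (∀ g ∈ K, g (m + 1) = 1) → ∀ g ∈ K, g m = 1 := by
      intro m hm g hg
      rw [hKsub hg m, hm g hg, one_pow]
    have up : ∀ m, l0 ≤ m → ∀ g ∈ K, g m = 1 := by
      intro m hm
      induction m, hm using Nat.le_induction with
      | base => exact hl0triv
      | succ n hn ih => exact step_up n ih
    have down : ∀ d, ∀ g ∈ K, g (l0 - d) = 1 := by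
      intro d
      induction d with
      | zero => simpa using hl0triv
      | succ c ih =>
        by_cases h : c < l0
        · apply step_down
          have he : l0 - (c + 1) + 1 = l0 - c := by omega
          rw [he]
          exact ih
        · have he : l0 - (c + 1) = l0 - c := by omega
          rw [he]; exact ih
    have hall' : ∀ m, ∀ g ∈ K, g m = 1 := by
      intro m
      rcases le_or_gt l0 m with h | h
      · exact up m h
      · have he : l0 - (l0 - m) = m := by omega
        rw [← he]; exact down (l0 - m)
    ext g
    simp only [Subgroup.mem_bot]
    constructor
    · intro hg; funext m; exact hall' m g hg
    · rintro rfl; exact K.one_mem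
/-- Every nontrivial proper closed subgroup of a `P`-adic solenoid `Σ_P` (`P` a sequence
of primes) is totally disconnected.  Subgroups of `Σ_P` are formalized as subgroups `H`
of `𝕋^ω` with `H ⊆ Σ_P`. -/
theorem stmt_11 (P : ℕ → ℕ) (hP : ∀ i, (P i).Prime) (H : Subgroup (ℕ → Circle))
    (hsub : (H : Set (ℕ → Circle)) ⊆ (solenoid P : Set (ℕ → Circle)))
    (hclosed : IsClosed (H : Set (ℕ → Circle)))
    (hnontriv : H ≠ ⊥)
    (hproper : (H : Set (ℕ → Circle)) ≠ (solenoid P : Set (ℕ → Circle))) :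
    IsTotallyDisconnected (H : Set (ℕ → Circle)) := by
  intro t hts htconn
  intro x hx y hy
  set K : Subgroup (ℕ → Circle) := (Subgroup.connectedComponentOfOne ↥H).map H.subtype with hK
  have hKcar : (K : Set (ℕ → Circle)) = connectedComponentIn (H : Set (ℕ → Circle)) 1 := by
    rw [connectedComponentIn_eq_image H.one_mem]
    rfl
  have hKsub : (K : Set (ℕ → Circle)) ⊆ (solenoid P : Set (ℕ → Circle)) := by
    rw [hKcar]
    exact (connectedComponentIn_subset _ _).trans hsub
  have hKclosed : IsClosed (K : Set (ℕ → Circle)) := by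
    rw [hKcar, connectedComponentIn_eq_image H.one_mem]
    exact hclosed.isClosedEmbedding_subtypeVal.isClosed_iff_image_isClosed.1
      isClosed_connectedComponent
  have hKconn : IsPreconnected (K : Set (ℕ → Circle)) := by
    rw [hKcar]
    exact isPreconnected_connectedComponentIn
  have hKne : (K : Set (ℕ → Circle)) ≠ (solenoid P : Set (ℕ → Circle)) := by
    intro h
    apply hproper
    refine Set.Subset.antisymm hsub ?_
    rw [← h, hKcar]
    exact connectedComponentIn_subset _ _
  have hKbot : K = ⊥ := solenoid_preconn_subgroup P hP K hKsub hKclosed hKconn hKne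
  -- translate
  have hxH : x ∈ H := hts hx
  have hyH : y ∈ H := hts hy
  set s : Set (ℕ → Circle) := (fun z => z * x⁻¹) '' t with hs
  have hsconn : IsPreconnected s := htconn.image _ (continuous_mul_right x⁻¹).continuousOn
  have h1s : (1 : ℕ → Circle) ∈ s := ⟨x, hx, mul_inv_cancel x⟩
  have hsH : s ⊆ (H : Set (ℕ → Circle)) := by
    rintro _ ⟨z, hz, rfl⟩
    exact H.mul_mem (hts hz) (H.inv_mem hxH)
  have hsK : s ⊆ connectedComponentIn (H : Set (ℕ → Circle)) 1 :=
    hsconn.subset_connectedComponentIn h1s hsH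
  rw [← hKcar, hKbot] at hsK
  have : y * x⁻¹ ∈ ((⊥ : Subgroup (ℕ → Circle)) : Set (ℕ → Circle)) := hsK ⟨y, hy, rfl⟩
  rw [Subgroup.coe_bot, mem_singleton_iff] at this
  exact (eq_of_mul_inv_eq_one this).symm ▸ (mul_inv_eq_one.1 this).symm
end

section
/- For sequences of primes P and Q, there exists a nonzero continuous homomorphism f : Σ_P → Σ_Q if and only if there exists a surjective continuous homomorphism g : Σ_P → Σ_Q. -/
open Filter Topology Complex Real


lemma circle_exp_pow (x : ℝ) (n : ℕ) : Circle.exp x ^ n = Circle.exp (n * x) := by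
  induction n with
  | zero => simp
  | succ n ih =>
    rw [pow_succ, ih, ← Circle.exp_add]
    congr 1
    push_cast; ring

/-- the product denominator -/
noncomputable def cden (P : ℕ → ℕ) (l : ℕ) : ℝ := ∏ i ∈ Finset.range l, (P i : ℝ)

lemma cden_ne {P : ℕ → ℕ} (hP : ∀ i, (P i).Prime) (l : ℕ) : cden P l ≠ 0 :=
  Finset.prod_ne_zero_iff.mpr fun i _ => Nat.cast_ne_zero.mpr (hP i).ne_zero

lemma cden_succ (P : ℕ → ℕ) (l : ℕ) : cden P (l + 1) = cden P l * P l :=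
  Finset.prod_range_succ _ _

/-- the dense one-parameter subgroup of the solenoid -/
noncomputable def lineMap (P : ℕ → ℕ) (t : ℝ) : ℕ → Circle :=
  fun l => Circle.exp (t / cden P l)

lemma lineMap_mem {P : ℕ → ℕ} (hP : ∀ i, (P i).Prime) (t : ℝ) :
    lineMap P t ∈ solenoid P := by
  intro l
  show Circle.exp (t / cden P l) = Circle.exp (t / cden P (l + 1)) ^ P l
  rw [circle_exp_pow]
  congr 1
  rw [cden_succ]
  have h1 : cden P l ≠ 0 := cden_ne hP l
  have h2 : (P l : ℝ) ≠ 0 := Nat.cast_ne_zero.mpr (hP l).ne_zero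
  field_simp

lemma lineMap_pow (P : ℕ → ℕ) (t : ℝ) (k : ℕ) :
    lineMap P t ^ k = lineMap P (k * t) := by
  funext l
  show Circle.exp (t / cden P l) ^ k = Circle.exp (k * t / cden P l)
  rw [circle_exp_pow, mul_div_assoc]

lemma lineMap_zero (P : ℕ → ℕ) : lineMap P 0 = 1 := by
  funext l
  show Circle.exp (0 / cden P l) = 1
  simp

lemma lineMap_continuous (P : ℕ → ℕ) : Continuous (lineMap P) :=
  continuous_pi fun l => Circle.exp.continuous.comp (continuous_id.div_const _)
lemma sol_coord {P : ℕ → ℕ} {x : ℕ → Circle} (hx : ∀ l, x l = x (l + 1) ^ P l)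
    {l m : ℕ} (h : l ≤ m) : x l = x m ^ ∏ i ∈ Finset.Ico l m, P i := by
  induction m, h using Nat.le_induction with
  | base => simp
  | succ m hm ih =>
    rw [ih, Finset.prod_Ico_succ_top hm, hx m, ← pow_mul, mul_comm (P m)]

/-- Density criterion in a solenoid: if a set can match arbitrarily late coordinates
of any point, it is dense. -/
lemma sol_dense_of_coords {Q : ℕ → ℕ} (t : Set ↥(solenoid Q))
    (ht : ∀ x : ↥(solenoid Q), ∀ m : ℕ, ∃ n, m ≤ n ∧ ∃ y ∈ t,
      (y : ℕ → Circle) n = (x : ℕ → Circle) n) :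
    Dense t := by
  intro x
  choose n hn y hyt hyc using ht x
  have hx2 : ∀ l, (x : ℕ → Circle) l = (x : ℕ → Circle) (l + 1) ^ Q l := x.2
  have htend : Tendsto (fun m => y m) atTop (𝓝 x) := by
    rw [tendsto_subtype_rng, tendsto_pi_nhds]
    intro l
    apply tendsto_const_nhds.congr'
    filter_upwards [eventually_ge_atTop l] with m hlm
    have h1 : l ≤ n m := hlm.trans (hn m)
    have := (y m).2
    calc (x : ℕ → Circle) l = (x : ℕ → Circle) (n m) ^ ∏ i ∈ Finset.Ico l (n m), Q i :=
          sol_coord hx2 h1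
      _ = ((y m : ℕ → Circle) (n m)) ^ ∏ i ∈ Finset.Ico l (n m), Q i := by rw [hyc m]
      _ = (y m : ℕ → Circle) l := (sol_coord (y m).2 h1).symm
  exact mem_closure_of_tendsto htend (Eventually.of_forall hyt)

/-- the solenoid is a closed subset. -/
lemma solenoid_isClosed (P : ℕ → ℕ) : IsClosed ((solenoid P : Set (ℕ → Circle))) := by
  have : (solenoid P : Set (ℕ → Circle)) = ⋂ l, {g : ℕ → Circle | g l = g (l + 1) ^ P l} := by
    ext g; simp only [Set.mem_iInter, SetLike.mem_coe]
    exact ⟨fun h l => h l, fun h l => h l⟩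
  rw [this]
  exact isClosed_iInter fun l =>
    isClosed_eq (continuous_apply l) ((continuous_apply (l + 1)).pow _)

instance solenoid_compact (P : ℕ → ℕ) : CompactSpace ↥(solenoid P) :=
  isCompact_iff_compactSpace.mp ((solenoid_isClosed P).isCompact)
lemma subgroup_circle_dense (K : Subgroup Circle) (u : ℕ → Circle)
    (hu : ∀ j, u j ∈ K) (hne : ∀ j, u j ≠ 1) (hlim : Tendsto u atTop (𝓝 1)) :
    Dense (K : Set Circle) := by
  -- the preimage subgroup of ℝ
  set A : AddSubgroup ℝ :=
    { carrier := {t | Circle.exp t ∈ K}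
      zero_mem' := by simp [K.one_mem]
      add_mem' := by intro a b ha hb; simpa [Circle.exp_add] using K.mul_mem ha hb
      neg_mem' := by intro a ha; simpa [Circle.exp_neg] using K.inv_mem ha } with hA
  have hdA : Dense (A : Set ℝ) := by
    apply A.dense_of_not_isolated_zero
    intro ε hε
    -- arg ∘ u tends to arg 1 = 0
    have harg : Tendsto (fun j => Complex.arg (u j)) atTop (𝓝 0) := by
      have hc : ContinuousAt (fun z : Circle => Complex.arg (z : ℂ)) 1 := by
        exact (Complex.continuousAt_arg (by simpa using Complex.one_mem_slitPlane)).comp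
          continuous_subtype_val.continuousAt
      simpa [Function.comp_def] using (hc.tendsto.comp hlim)
    have : ∀ᶠ j in atTop, |Complex.arg (u j)| < ε := by
      have := harg.abs
      simpa using this.eventually (gt_mem_nhds (by simpa using hε))
    obtain ⟨j, hj⟩ := this.exists
    have hargne : Complex.arg (u j) ≠ 0 := by
      intro h0
      apply hne j
      have := Circle.exp_arg (u j)
      rw [h0, Circle.exp_zero] at this
      exact this.symm
    refine ⟨|Complex.arg (u j)|, ?_, ⟨abs_pos.mpr hargne, hj⟩⟩
    rcases abs_cases (Complex.arg (u j)) with ⟨he, _⟩ | ⟨he, _⟩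
    · rw [he]; simpa [hA, Circle.exp_arg] using hu j
    · rw [he]
      show Circle.exp (-(Complex.arg (u j))) ∈ K
      rw [Circle.exp_neg, Circle.exp_arg]
      exact K.inv_mem (hu j)
  -- push density through exp
  rw [dense_iff_inter_open]
  intro U hU ⟨z, hz⟩
  have hVo : IsOpen (Circle.exp ⁻¹' U) := hU.preimage Circle.exp.continuous
  have hVne : (Circle.exp ⁻¹' U).Nonempty := ⟨Complex.arg z, by simpa [Circle.exp_arg] using hz⟩
  obtain ⟨a, haA, haV⟩ := hdA.exists_mem_open hVo hVne
  exact ⟨Circle.exp a, haV, haA⟩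
/-- For sequences of primes `P` and `Q`, there exists a nonzero continuous homomorphism
`f : Σ_P → Σ_Q` if and only if there exists a surjective continuous homomorphism
`g : Σ_P → Σ_Q`. -/
theorem stmt_12 (P Q : ℕ → ℕ) (hP : ∀ i, (P i).Prime) (hQ : ∀ i, (Q i).Prime) :
    (∃ f : solenoid P →* solenoid Q, Continuous f ∧ f ≠ 1) ↔
    (∃ g : solenoid P →* solenoid Q, Continuous g ∧ Function.Surjective g) := by
  constructor
  · rintro ⟨f, hfc, hfne⟩
    refine ⟨f, hfc, ?_⟩
    -- the one-parameter subgroup of `solenoid P`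
    set φ : ℝ → ↥(solenoid P) := fun t => ⟨lineMap P t, lineMap_mem hP t⟩ with hφ
    have hφc : Continuous φ := (lineMap_continuous P).subtype_mk _
    have hφ0 : φ 0 = 1 := Subtype.ext (lineMap_zero P)
    have hφpow : ∀ (t : ℝ) (k : ℕ), φ t ^ k = φ (k * t) := fun t k =>
      Subtype.ext (by
        push_cast
        exact lineMap_pow P t k)
    -- the range of φ is dense
    have hφdense : Dense (Set.range φ) := by
      apply sol_dense_of_coords
      intro x m
      refine ⟨m, le_rfl, φ (cden P m * Complex.arg ((x : ℕ → Circle) m)), ⟨_, rfl⟩, ?_⟩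
      show Circle.exp (cden P m * Complex.arg ((x : ℕ → Circle) m) / cden P m)
          = (x : ℕ → Circle) m
      rw [mul_div_cancel_left₀ _ (cden_ne hP m), Circle.exp_arg]
    -- f is nontrivial on the dense line
    have hft : ∃ t : ℝ, f (φ t) ≠ 1 := by
      by_contra h
      push_neg at h
      apply hfne
      have : ⇑f = ⇑(1 : solenoid P →* solenoid Q) := by
        apply Continuous.ext_on hφdense hfc continuous_const
        rintro z ⟨t, rfl⟩
        exact h t
      exact DFunLike.ext _ _ fun x => congrFun this x
    obtain ⟨t0, ht0⟩ := hft
    set v : ℕ → Circle := ((f (φ t0) : ℕ → Circle)) with hv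
    have hvmem : ∀ l, v l = v (l + 1) ^ Q l := (f (φ t0)).2
    have hvm0 : ∃ m0, v m0 ≠ 1 := by
      by_contra h
      push_neg at h
      exact ht0 (Subtype.ext (funext h))
    obtain ⟨m0, hm0⟩ := hvm0
    -- each coordinate map (late enough) is surjective
    have hcoord : ∀ n, m0 ≤ n → ∀ z : Circle, ∃ p : ↥(solenoid P),
        (f p : ℕ → Circle) n = z := by
      intro n hn z
      set ρ : ↥(solenoid P) →* Circle :=
        (Pi.evalMonoidHom (fun _ => Circle) n).comp ((solenoid Q).subtype.comp f) with hρ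
      have hρc : Continuous ρ := (continuous_apply n).comp (continuous_subtype_val.comp hfc)
      have hvn : v n ≠ 1 := by
        intro h1
        apply hm0
        rw [sol_coord hvmem hn, h1, one_pow]
      -- elements of the range approaching 1
      set u : ℕ → Circle := fun j => ρ (φ (t0 / 2 ^ j)) with hu
      have hune : ∀ j, u j ≠ 1 := by
        intro j h1
        apply hvn
        have : u j ^ 2 ^ j = v n := by
          rw [hu]
          show ρ (φ (t0 / 2 ^ j)) ^ 2 ^ j = v n
          rw [← map_pow, hφpow, hρ]
          congr 2
          push_cast
          field_simp
          rfl
        rw [← this, h1, one_pow]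
      have hulim : Tendsto u atTop (𝓝 1) := by
        have h2 : Tendsto (fun j : ℕ => t0 / 2 ^ j) atTop (𝓝 0) := by
          have := (tendsto_pow_atTop_nhds_zero_of_lt_one
            (by norm_num : (0:ℝ) ≤ 1/2) (by norm_num : (1:ℝ)/2 < 1)).const_mul t0
          simpa [div_eq_mul_inv, ← inv_pow] using this
        have h3 : Tendsto (fun s : ℝ => ρ (φ s)) (𝓝 0) (𝓝 1) := by
          have := (hρc.comp hφc).tendsto 0
          simp only [Function.comp_def, Function.comp_apply, hφ0, map_one] at this
          exact this
        exact h3.comp h2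
      have hdense : Dense (ρ.range : Set Circle) :=
        subgroup_circle_dense ρ.range u (fun j => ⟨_, rfl⟩) hune hulim
      have hclosed : IsClosed (ρ.range : Set Circle) := by
        rw [MonoidHom.coe_range]
        exact (isCompact_range hρc).isClosed
      have : (ρ.range : Set Circle) = Set.univ := hclosed.closure_eq ▸ hdense.closure_eq
      have hz : z ∈ ρ.range := by rw [← SetLike.mem_coe, this]; trivial
      obtain ⟨p, hp⟩ := hz
      exact ⟨p, hp⟩
    -- hence the range of f is dense
    have hrd : Dense (Set.range ⇑f) := by
      apply sol_dense_of_coords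
      intro x m
      obtain ⟨p, hp⟩ := hcoord (max m m0) (le_max_right _ _) ((x : ℕ → Circle) (max m m0))
      exact ⟨max m m0, le_max_left _ _, f p, ⟨p, rfl⟩, hp⟩
    have hrc : IsClosed (Set.range ⇑f) := (isCompact_range hfc).isClosed
    rw [← Set.range_eq_univ]
    exact hrc.closure_eq ▸ hrd.closure_eq
  · rintro ⟨g, hgc, hgs⟩
    refine ⟨g, hgc, ?_⟩
    intro hg1
    -- the solenoid over Q is nontrivial
    have hx : lineMap Q (2 * π) ∈ solenoid Q := lineMap_mem hQ (2 * π)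
    have hxne : (⟨lineMap Q (2 * π), hx⟩ : ↥(solenoid Q)) ≠ 1 := by
      intro h
      have h1 : lineMap Q (2 * π) 1 = 1 := by
        have := congrArg Subtype.val h
        exact congrFun this 1
      have harg : Complex.arg (lineMap Q (2 * π) 1) = 2 * π / Q 0 := by
        show Complex.arg (Circle.exp (2 * π / cden Q 1)) = 2 * π / Q 0
        have hc : cden Q 1 = (Q 0 : ℝ) := by simp [cden]
        rw [hc]
        have h2 : (2 : ℝ) ≤ (Q 0 : ℝ) := by exact_mod_cast (hQ 0).two_le
        have hπ : (0:ℝ) < π := Real.pi_pos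
        apply Circle.arg_exp
        · have : 0 < 2 * π / Q 0 := div_pos (by linarith) (by linarith)
          linarith
        · rw [div_le_iff₀ (by linarith)]
          nlinarith
      rw [h1] at harg
      simp only [Circle.coe_one, Complex.arg_one] at harg
      have h2 : (2 : ℝ) ≤ (Q 0 : ℝ) := by exact_mod_cast (hQ 0).two_le
      have hπ : (0:ℝ) < π := Real.pi_pos
      have : 0 < 2 * π / Q 0 := div_pos (by linarith) (by linarith)
      linarith [harg ▸ this]
    obtain ⟨p, hp⟩ := hgs ⟨lineMap Q (2 * π), hx⟩
    rw [hg1] at hp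
    exact hxne hp.symm
end

section
/- Let Γ be generated by η, ξ₀, ξ₁, … with relations 2^{k_{i+1}}ξ_{i+1} = ξ_i + η (k_i ∈ ℕ⁺, sup k_i = ∞), and let D ⊆ ℚ be a subgroup of the form { m / (p(0)p(1)⋯p(n)) : m ∈ ℤ, n ∈ ℕ } for a sequence of primes p with only finitely many p(i) equal to 2. Then every group homomorphism f : Γ → D is zero. -/
open Finset in
/-- Let `Γ` be generated by `η, ξ 0, ξ 1, …` with relations
`2 ^ k (i+1) • ξ (i+1) = ξ i + η` (`k i` positive, `sup k i = ∞`), and let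
`D ⊆ ℚ` be the subgroup `{ m / (p 0 * p 1 * ⋯ * p n) : m ∈ ℤ, n ∈ ℕ }` for a sequence
of primes `p` with only finitely many `p i` equal to `2`.  Then every group
homomorphism `f : Γ → D` is zero. -/
theorem stmt_18 (Γ : Type*) [AddCommGroup Γ] (η : Γ) (ξ : ℕ → Γ) (k : ℕ → ℕ)
    (hkpos : ∀ i, 0 < k i) (hksup : ∀ N : ℕ, ∃ i, N ≤ k i)
    (hrel : ∀ i, (2 ^ k (i + 1) : ℤ) • ξ (i + 1) = ξ i + η)
    (hgen : AddSubgroup.closure ({η} ∪ Set.range ξ) = (⊤ : AddSubgroup Γ))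
    (p : ℕ → ℕ) (hp : ∀ i, (p i).Prime) (hp2 : {i : ℕ | p i = 2}.Finite)
    (f : Γ →+ ℚ)
    (hf : ∀ x : Γ, f x ∈
      {q : ℚ | ∃ (m : ℤ) (n : ℕ), q = (m : ℚ) / ∏ i ∈ range (n + 1), (p i : ℚ)}) :
    f = 0 := by
  classical
  set M := hp2.toFinset.card with hM
  -- every value of `2^M * f x` has an odd denominator
  have hden : ∀ x : Γ, ∃ a b : ℤ, Odd b ∧ 0 < b ∧ (2:ℚ)^M * f x * b = a := by
    intro x
    obtain ⟨m, n, hx⟩ := hf x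
    set F := (Finset.range (n+1)).filter (fun i => p i = 2) with hF
    set b : ℕ := ∏ i ∈ (Finset.range (n+1)).filter (fun i => ¬ p i = 2), p i with hb
    have hsplit : ∏ i ∈ Finset.range (n+1), p i = 2^F.card * b := by
      rw [← Finset.prod_filter_mul_prod_filter_not (Finset.range (n+1)) (fun i => p i = 2)]
      congr 1
      rw [Finset.prod_congr rfl (fun i hi => (Finset.mem_filter.mp hi).2), Finset.prod_const]
    have hFM : F.card ≤ M := Finset.card_le_card (fun i hi => hp2.mem_toFinset.mpr
      (Finset.mem_filter.mp hi).2)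
    have hbpos : 0 < b := Finset.prod_pos (fun i _ => (hp i).pos)
    have hbodd : ¬ 2 ∣ b := by
      intro h
      obtain ⟨i, hi, hdvd⟩ := (Nat.prime_two.prime.dvd_finset_prod_iff _).mp h
      exact (Finset.mem_filter.mp hi).2
        ((Nat.prime_dvd_prime_iff_eq Nat.prime_two (hp i)).mp hdvd).symm
    refine ⟨2^(M - F.card) * m, b, ?_, by exact_mod_cast hbpos, ?_⟩
    · exact_mod_cast Nat.odd_iff.mpr (Nat.two_dvd_ne_zero.mp hbodd)
    · have hprod : ∏ i ∈ Finset.range (n+1), (p i : ℚ) = (2:ℚ)^F.card * b := by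
        rw [← Nat.cast_prod, hsplit]
        push_cast
        ring
      have h2 : (2:ℚ)^M = 2^(M - F.card) * 2^F.card := by
        rw [← pow_add]; congr 1; omega
      have hb0 : (b:ℚ) ≠ 0 := by positivity
      rw [hx, hprod, h2]
      push_cast
      field_simp
  -- notation
  set A : ℚ := f η with hA
  set B : ℕ → ℚ := fun n => f (ξ n) with hB
  have hAB : ∀ i, (2:ℚ)^(k (i+1)) * B (i+1) = B i + A := by
    intro i
    have := congrArg f (hrel i)
    rw [map_zsmul, map_add] at this
    push_cast [zsmul_eq_mul] at this
    exact_mod_cast this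
  choose aB bB hoddB hposB heqB using fun n => hden (ξ n)
  obtain ⟨aA, bA, hoddA, hposA, heqA⟩ := hden η
  -- sums of exponents and partial sums of powers of two
  set s : ℕ → ℕ := fun n => ∑ j ∈ Finset.range n, k (j+1) with hs
  set u : ℕ → ℤ := fun n => ∑ j ∈ Finset.range n, 2^(s j) with hu
  have hs_succ : ∀ n, s (n+1) = s n + k (n+1) := fun n => Finset.sum_range_succ _ n
  have hu_succ : ∀ n, u (n+1) = u n + 2^(s n) := fun n => Finset.sum_range_succ _ n
  have hs_ge : ∀ n, n ≤ s n := by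
    intro n
    calc n = ∑ j ∈ Finset.range n, 1 := by simp
    _ ≤ s n := Finset.sum_le_sum fun j _ => hkpos (j+1)
  have hu_mono : StrictMono u := strictMono_nat_of_lt_succ fun n => by
    have h0 : (0:ℤ) < 2^(s n) := by positivity
    rw [hu_succ]; linarith
  have hu_nonneg : ∀ n, 0 ≤ u n := fun n => Finset.sum_nonneg fun j _ => by positivity
  have hu_lt : ∀ n, u n < 2^(s n) := by
    intro n
    induction n with
    | zero => simp [hu, hs]
    | succ n ih =>
      rw [hu_succ]
      have h1 : s n + 1 ≤ s (n+1) := by rw [hs_succ]; have := hkpos (n+1); omega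
      calc u n + 2^(s n) < 2^(s n) + 2^(s n) := by linarith
      _ = 2^(s n + 1) := by ring
      _ ≤ 2^(s (n+1)) := pow_le_pow_right₀ one_le_two h1
  -- key telescoping identity
  have key : ∀ n, B 0 + A * (u n : ℚ) = 2^(s n) * B n := by
    intro n
    induction n with
    | zero => simp [hu, hs]
    | succ n ih =>
      rw [hu_succ, hs_succ]
      push_cast
      have h1 := hAB n
      have h2 : (2:ℚ)^(s n + k (n+1)) = 2^(s n) * 2^(k (n+1)) := pow_add 2 _ _
      rw [h2]
      calc B 0 + A * ((u n : ℚ) + 2^(s n)) = (B 0 + A * (u n : ℚ)) + 2^(s n) * A := by ring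
      _ = 2^(s n) * B n + 2^(s n) * A := by rw [ih]
      _ = 2^(s n) * (B n + A) := by ring
      _ = 2^(s n) * (2^(k (n+1)) * B (n+1)) := by rw [h1]
      _ = 2^(s n) * 2^(k (n+1)) * B (n+1) := by ring
  -- the integer identity
  have hint : ∀ n, (aB 0 * bA + aA * bB 0 * u n) * bB n = 2^(s n) * (aB n * (bA * bB 0)) := by
    intro n
    have hq : ((aB 0 * bA + aA * bB 0 * u n) * bB n : ℚ) =
        (2:ℚ)^(s n) * ((aB n : ℚ) * ((bA : ℚ) * (bB 0 : ℚ))) := by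
      rw [← heqB 0, ← heqA, ← heqB n]
      linear_combination ((2:ℚ)^M * bA * bB 0 * bB n) * key n
    exact_mod_cast hq
  have hcop : ∀ n : ℕ, ∀ m : ℕ, IsCoprime ((2:ℤ)^m) (bB n) := by
    intro n m
    refine IsCoprime.pow_left <| (Int.prime_two.coprime_iff_not_dvd).mpr ?_
    intro h
    have h1 := Int.odd_iff.mp (hoddB n)
    omega
  have hcopA : ∀ m : ℕ, IsCoprime ((2:ℤ)^m) bA := by
    intro m
    refine IsCoprime.pow_left <| (Int.prime_two.coprime_iff_not_dvd).mpr ?_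
    intro h
    have h1 := Int.odd_iff.mp hoddA
    omega
  -- unboundedness of k beyond any index
  have hk_inf : ∀ L m : ℕ, ∃ n, m < n ∧ L < k n := by
    intro L m
    set T := (Finset.range (m+1)).sup k with hT
    obtain ⟨i, hi⟩ := hksup (max (L+1) (T+1))
    refine ⟨i, ?_, ?_⟩
    · by_contra h
      push_neg at h
      have : k i ≤ T := Finset.le_sup (Finset.mem_range.mpr (by omega))
      have := le_max_right (L+1) (T+1)
      omega
    · have := le_max_left (L+1) (T+1); omega
  -- Step 1 : A = 0
  have hA0 : A = 0 := by
    by_contra hA0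
    have hy0 : aA * bB 0 ≠ 0 := by
      have haA : (aA : ℚ) ≠ 0 := by
        rw [← heqA, ← hA]
        have h1 : (bA : ℚ) ≠ 0 := by exact_mod_cast hposA.ne'
        have h2 : (2:ℚ)^M ≠ 0 := by positivity
        exact mul_ne_zero (mul_ne_zero h2 hA0) h1
      have : aA ≠ 0 := by exact_mod_cast haA
      exact mul_ne_zero this (by exact_mod_cast (hposB 0).ne')
    obtain ⟨x, y, hx, hy⟩ : ∃ x y : ℤ, x = aB 0 * bA ∧ y = aA * bB 0 :=
      ⟨_, _, rfl, rfl⟩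
    rw [← hy] at hy0
    obtain ⟨C, hC⟩ : ∃ C : ℤ, C = |x| + |y| := ⟨_, rfl⟩
    have hCpos : 0 < C := by
      have h1 := abs_nonneg x
      have h2 : 0 < |y| := abs_pos.mpr hy0
      omega
    obtain ⟨L, hLC⟩ : ∃ L : ℕ, 2*C < 2^L := by
      refine ⟨(2*C).toNat, ?_⟩
      calc 2*C ≤ ((2*C).toNat : ℤ) := Int.self_le_toNat _
      _ < 2^((2*C).toNat) := by exact_mod_cast Nat.lt_two_pow_self (n := (2*C).toNat)
    -- at any index j+1 with L < k (j+1), the integer x + y * u (j+1) vanishes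
    have hzero : ∀ j : ℕ, L < k (j+1) → x + y * u (j+1) = 0 := by
      intro j hj
      have hdvd : 2^(s (j+1)) ∣ x + y * u (j+1) := by
        refine (hcop (j+1) (s (j+1))).dvd_of_dvd_mul_right
          ⟨aB (j+1) * (bA * bB 0), ?_⟩
        rw [hx, hy]
        exact hint (j+1)
      have hpow0 : (0:ℤ) < 2^(s j) := by positivity
      have hpow1 : (1:ℤ) ≤ 2^(s j) := by
        have := Int.lt_iff_add_one_le.mp hpow0
        linarith
      have hbound : |x + y * u (j+1)| < 2^(s (j+1)) := by
        have e1 : |y * u (j+1)| = |y| * u (j+1) := by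
          rw [abs_mul, abs_of_nonneg (hu_nonneg (j+1))]
        have h1 : |x + y * u (j+1)| ≤ |x| + |y| * u (j+1) := by
          have := abs_add_le x (y * u (j+1))
          linarith [this, e1.le, e1.ge]
        have h2 : u (j+1) ≤ 2 * 2^(s j) := by
          have := hu_lt j
          rw [hu_succ]
          linarith
        have h4 : |x| + |y| * u (j+1) ≤ C * (2 * 2^(s j)) := by
          have hxle : |x| ≤ |x| * (2 * 2^(s j)) :=
            le_mul_of_one_le_right (abs_nonneg x) (by linarith)
          have hyle : |y| * u (j+1) ≤ |y| * (2 * 2^(s j)) :=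
            mul_le_mul_of_nonneg_left h2 (abs_nonneg y)
          calc |x| + |y| * u (j+1) ≤ |x| * (2 * 2^(s j)) + |y| * (2 * 2^(s j)) := by
                linarith
          _ = C * (2 * 2^(s j)) := by rw [hC]; ring
        have h5 : C * (2 * 2^(s j)) < 2^(s (j+1)) := by
          have h6 : (2:ℤ)^(s (j+1)) = 2^(k (j+1)) * 2^(s j) := by
            rw [hs_succ, pow_add]; ring
          have h7 : 2*C < 2^(k (j+1)) := by
            calc 2*C < 2^L := hLC
            _ ≤ 2^(k (j+1)) := pow_le_pow_right₀ one_le_two (le_of_lt hj)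
          calc C * (2 * 2^(s j)) = (2*C) * 2^(s j) := by ring
          _ < 2^(k (j+1)) * 2^(s j) := mul_lt_mul_of_pos_right h7 hpow0
          _ = 2^(s (j+1)) := h6.symm
        linarith
      exact Int.eq_zero_of_abs_lt_dvd hdvd hbound
    obtain ⟨n₁, hn₁pos, hn₁⟩ := hk_inf L 0
    obtain ⟨n₂, hn₂gt, hn₂⟩ := hk_inf L n₁
    obtain ⟨j₁, rfl⟩ : ∃ j, n₁ = j + 1 := ⟨n₁ - 1, by omega⟩
    obtain ⟨j₂, rfl⟩ : ∃ j, n₂ = j + 1 := ⟨n₂ - 1, by omega⟩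
    have h1 := hzero j₁ hn₁
    have h2 := hzero j₂ hn₂
    have h3 : y * (u (j₁+1) - u (j₂+1)) = 0 := by linear_combination h1 - h2
    rcases mul_eq_zero.mp h3 with h | h
    · exact hy0 h
    · have h4 : u (j₁+1) = u (j₂+1) := by omega
      have h5 := hu_mono (show j₁+1 < j₂+1 by omega)
      omega
  -- aA = 0
  have haA0 : aA = 0 := by
    have : (aA : ℚ) = 0 := by
      rw [← heqA, ← hA, hA0]
      ring
    exact_mod_cast this
  -- Step 2 : B 0 = 0
  have hB00 : B 0 = 0 := by
    have haB0 : aB 0 = 0 := by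
      by_contra h
      obtain ⟨n, hn⟩ : ∃ n : ℕ, n = (aB 0).natAbs := ⟨_, rfl⟩
      have h1 := hint n
      rw [haA0] at h1
      have h1' : (aB 0 * bA) * bB n = 2^(s n) * (aB n * (bA * bB 0)) := by
        linear_combination h1
      have hdvd1 : (2:ℤ)^(s n) ∣ (aB 0 * bA) * bB n := ⟨_, h1'⟩
      have hdvd2 : (2:ℤ)^(s n) ∣ aB 0 * bA := (hcop n (s n)).dvd_of_dvd_mul_right hdvd1
      have hdvd : (2:ℤ)^(s n) ∣ aB 0 := (hcopA (s n)).dvd_of_dvd_mul_right hdvd2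
      have hlt : |aB 0| < 2^(s n) := by
        have ha4 : ((aB 0).natAbs : ℤ) < 2^(aB 0).natAbs := by
          exact_mod_cast Nat.lt_two_pow_self (n := (aB 0).natAbs)
        have ha2 : (2:ℤ)^n ≤ 2^(s n) := pow_le_pow_right₀ one_le_two (hs_ge n)
        rw [Int.abs_eq_natAbs]
        calc ((aB 0).natAbs : ℤ) < 2^(aB 0).natAbs := ha4
        _ = 2^n := by rw [hn]
        _ ≤ 2^(s n) := ha2
      exact h (Int.eq_zero_of_abs_lt_dvd hdvd hlt)
    show f (ξ 0) = 0
    have h := heqB 0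
    rw [haB0] at h
    have hb0 : (bB 0 : ℚ) ≠ 0 := by exact_mod_cast (hposB 0).ne'
    have h2M : (2:ℚ)^M ≠ 0 := by positivity
    push_cast at h
    rcases mul_eq_zero.mp h with h | h
    · rcases mul_eq_zero.mp h with h | h
      · exact absurd h h2M
      · exact h
    · exact absurd h hb0
  -- Step 3 : all B n = 0
  have hBall : ∀ n, B n = 0 := by
    intro n
    induction n with
    | zero => exact hB00
    | succ n ih =>
      have h := hAB n
      rw [ih, hA0, add_zero] at h
      have h2 : (2:ℚ)^(k (n+1)) ≠ 0 := by positivity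
      exact (mul_eq_zero.mp h).resolve_left h2
  -- conclude
  have hker : AddSubgroup.closure ({η} ∪ Set.range ξ) ≤ f.ker := by
    rw [AddSubgroup.closure_le]
    rintro z (hz | ⟨i, rfl⟩)
    · simp only [Set.mem_singleton_iff] at hz
      subst hz
      exact AddMonoidHom.mem_ker.mpr (hA ▸ hA0)
    · exact AddMonoidHom.mem_ker.mpr (hBall i)
  rw [hgen] at hker
  ext z
  exact AddMonoidHom.mem_ker.mp (hker (AddSubgroup.mem_top z))
end
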